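/- Let L₁ = {(a²b)^{2k} : k ≥ 0} ∪ {(ab²)^{2k} : k ≥ 0} over the alphabet {a, b}. For every nonempty word w over {a, b}: w is syntactically equivalent to b·a·b² with respect to L₁ if and only if w = b·a·b²·(a·b²)^{2k} for some natural number k. -/

import Mathlib

/-- The two-letter alphabet `{a, b}`. -/
inductive AB : Type
  | a : AB
  | b : AB

/-- Words over `{a, b}`, as elements of the free monoid (the empty word is `1`). -/
abbrev Word : Type := FreeMonoid AB

/-- The letter `a` as a word. -/
def wa : Word := FreeMonoid.of AB.a

/-- The letter `b` as a word. -/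
def wb : Word := FreeMonoid.of AB.b

/-- Syntactic equivalence of `u` and `v` with respect to the language `L`:
for all (possibly empty) words `p, q`, `p·u·q ∈ L ↔ p·v·q ∈ L`. -/
def SynEq (L : Set Word) (u v : Word) : Prop :=
  ∀ p q : Word, p * u * q ∈ L ↔ p * v * q ∈ L

/-- The language `L₁ = ((a²b)²)* ∪ ((ab²)²)* = {(a²b)^(2k) : k ≥ 0} ∪ {(ab²)^(2k) : k ≥ 0}`. -/
def L1 : Set Word :=
  {w | ∃ k : ℕ, w = (wa ^ 2 * wb) ^ (2 * k)} ∪ {w | ∃ k : ℕ, w = (wa * wb ^ 2) ^ (2 * k)}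

open AB

/-- `(abb)^n` as a list. -/
def repAbb : ℕ → List AB
  | 0 => []
  | n + 1 => a :: b :: b :: repAbb n

/-- `(aab)^n` as a list. -/
def repAab : ℕ → List AB
  | 0 => []
  | n + 1 => a :: a :: b :: repAab n

lemma repAbb_add (m n : ℕ) : repAbb (m + n) = repAbb m ++ repAbb n := by
  induction m with
  | zero => simp [repAbb]
  | succ m ih =>
      have : m + 1 + n = (m + n) + 1 := by omega
      rw [this, repAbb, repAbb, ih]; simp

lemma toList_pow_abb (n : ℕ) :
    FreeMonoid.toList ((wa * wb ^ 2) ^ n) = repAbb n := by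
  induction n with
  | zero => simp [repAbb, FreeMonoid.toList_one]
  | succ n ih =>
      rw [pow_succ', FreeMonoid.toList_mul, ih]
      show FreeMonoid.toList (wa * (wb * wb ^ 1)) ++ _ = _
      rw [pow_one]
      rfl

lemma toList_pow_aab (n : ℕ) :
    FreeMonoid.toList ((wa ^ 2 * wb) ^ n) = repAab n := by
  induction n with
  | zero => simp [repAab, FreeMonoid.toList_one]
  | succ n ih =>
      rw [pow_succ', FreeMonoid.toList_mul, ih]
      show FreeMonoid.toList ((wa * wa ^ 1) * wb) ++ _ = _
      rw [pow_one]
      rfl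

lemma mem_L1_iff (x : Word) :
    x ∈ L1 ↔ (∃ k, FreeMonoid.toList x = repAab (2 * k)) ∨
      (∃ k, FreeMonoid.toList x = repAbb (2 * k)) := by
  constructor
  · rintro (⟨k, rfl⟩ | ⟨k, rfl⟩)
    · exact Or.inl ⟨k, toList_pow_aab _⟩
    · exact Or.inr ⟨k, toList_pow_abb _⟩
  · rintro (⟨k, hk⟩ | ⟨k, hk⟩)
    · exact Or.inl ⟨k, FreeMonoid.toList.injective (by rw [hk, toList_pow_aab])⟩
    · exact Or.inr ⟨k, FreeMonoid.toList.injective (by rw [hk, toList_pow_abb])⟩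

/-- The factor `babb` never occurs in `(aab)^n`. -/
lemma no_babb_in_aab :
    ∀ (n : ℕ) (p q : List AB), p ++ b :: a :: b :: b :: q ≠ repAab n := by
  intro n
  induction n with
  | zero => intro p q h; cases p <;> simp [repAab] at h
  | succ n ih =>
      intro p q h
      match p with
      | [] => simp [repAab] at h
      | [x] => simp [repAab] at h
      | [x, y] =>
          simp [repAab] at h
          obtain ⟨-, -, h⟩ := h
          cases n <;> simp [repAab] at h
      | x :: y :: z :: p' =>
          simp only [repAab, List.cons_append, List.cons.injEq] at h
          obtain ⟨-, -, -, h⟩ := h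
          exact ih p' q h

/-- All occurrences of `babb` in `(abb)^n`. -/
lemma babb_in_abb :
    ∀ (n : ℕ) (p q : List AB), p ++ b :: a :: b :: b :: q = repAbb n →
      ∃ i j, p = repAbb i ++ [a, b] ∧ q = repAbb j ∧ n = i + j + 2 := by
  intro n
  induction n with
  | zero => intro p q h; cases p <;> simp [repAbb] at h
  | succ n ih =>
      intro p q h
      match p with
      | [] => simp [repAbb] at h
      | [x] => simp [repAbb] at h
      | [x, y] =>
          simp only [repAbb, List.cons_append, List.nil_append, List.cons.injEq] at h
          obtain ⟨hx, hy, -, h⟩ := h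
          cases n with
          | zero => simp [repAbb] at h
          | succ m =>
              simp only [repAbb, List.cons.injEq] at h
              obtain ⟨-, -, -, hq⟩ := h
              exact ⟨0, m, by simp [repAbb, hx, hy], hq, by omega⟩
      | x :: y :: z :: p' =>
          simp only [repAbb, List.cons_append, List.cons.injEq] at h
          obtain ⟨hx, hy, hz, h⟩ := h
          obtain ⟨i, j, hp', hq, hn⟩ := ih p' q h
          exact ⟨i + 1, j, by simp [repAbb, hx, hy, hz, hp'], hq, by omega⟩

lemma repAbb_cancel :
    ∀ (k j : ℕ) (Q : List AB), repAbb k ++ Q = repAbb j →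
      ∃ d, Q = repAbb d ∧ j = k + d := by
  intro k
  induction k with
  | zero => intro j Q h; exact ⟨j, by simpa [repAbb] using h, by omega⟩
  | succ k ih =>
      intro j Q h
      cases j with
      | zero => simp [repAbb] at h
      | succ j =>
          simp only [repAbb, List.cons_append, List.cons.injEq] at h
          obtain ⟨-, -, -, h⟩ := h
          obtain ⟨d, hQ, hj⟩ := ih j Q h
          exact ⟨d, hQ, by omega⟩

/-- Reassembly: `(abb)^i · ab · babb · (abb)^d = (abb)^(i+d+2)`. -/
lemma reassemble (i d : ℕ) :
    (repAbb i ++ [a, b]) ++ b :: a :: b :: b :: repAbb d = repAbb (i + d + 2) := by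
  have : i + d + 2 = i + (2 + d) := by omega
  rw [this, repAbb_add i (2 + d), repAbb_add 2 d]
  simp [repAbb]

/-- a nonempty word `w` is syntactically equivalent to `b·a·b²` with
respect to `L₁` if and only if `w = b·a·b²·(a·b²)^(2k)` for some `k : ℕ`. -/
theorem synEq_bab2_iff (w : Word) (hw : w ≠ 1) :
    SynEq L1 w (wb * wa * wb ^ 2) ↔
      ∃ k : ℕ, w = wb * wa * wb ^ 2 * (wa * wb ^ 2) ^ (2 * k) := by
  constructor
  · intro h
    have h1 := (h (wa * wb) 1).2
    have hrhs : (wa * wb) * (wb * wa * wb ^ 2) * 1 ∈ L1 := by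
      rw [mem_L1_iff]
      refine Or.inr ⟨1, ?_⟩
      show FreeMonoid.toList ((wa * wb) * (wb * wa * (wb * wb ^ 1)) * 1) = _
      rw [pow_one]
      rfl
    have hmem := h1 hrhs
    rw [mem_L1_iff] at hmem
    have htl : FreeMonoid.toList ((wa * wb) * w * 1) = a :: b :: FreeMonoid.toList w := by
      rw [mul_one, FreeMonoid.toList_mul]; rfl
    rcases hmem with ⟨k, hk⟩ | ⟨k, hk⟩
    · rw [htl] at hk
      exfalso
      cases k with
      | zero => simp [repAab] at hk
      | succ k =>
          have : 2 * (k + 1) = (2 * k + 1) + 1 := by omega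
          rw [this, repAab] at hk
          simp at hk
    · rw [htl] at hk
      cases k with
      | zero => simp [repAbb] at hk
      | succ k =>
          have : 2 * (k + 1) = (2 * k + 1) + 1 := by omega
          rw [this, repAbb] at hk
          simp only [List.cons.injEq] at hk
          obtain ⟨-, -, hk⟩ := hk
          refine ⟨k, FreeMonoid.toList.injective ?_⟩
          rw [hk]
          show _ = FreeMonoid.toList (wb * wa * wb ^ 2 * (wa * wb ^ 2) ^ (2 * k))
          rw [FreeMonoid.toList_mul, toList_pow_abb]
          show b :: (repAbb (2 * k + 1)) =
            FreeMonoid.toList (wb * wa * (wb * wb ^ 1)) ++ repAbb (2 * k)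
      
          rw [pow_one]
          show b :: (repAbb (2 * k + 1)) = [b, a, b, b] ++ repAbb (2 * k)
          have : 2 * k + 1 = 1 + 2 * k := by omega
          rw [this, repAbb_add]
          rfl
  · rintro ⟨k, rfl⟩
    intro p q
    rw [mem_L1_iff, mem_L1_iff]
    have hbabb : FreeMonoid.toList (wb * wa * wb ^ 2) = [b, a, b, b] := by
      show FreeMonoid.toList (wb * wa * (wb * wb ^ 1)) = _
      rw [pow_one]; rfl
    have htl1 : FreeMonoid.toList (p * (wb * wa * wb ^ 2 * (wa * wb ^ 2) ^ (2 * k)) * q)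
        = FreeMonoid.toList p ++ b :: a :: b :: b :: (repAbb (2 * k) ++ FreeMonoid.toList q) := by
      rw [FreeMonoid.toList_mul, FreeMonoid.toList_mul, FreeMonoid.toList_mul,
        toList_pow_abb, hbabb]
      simp
    have htl2 : FreeMonoid.toList (p * (wb * wa * wb ^ 2) * q)
        = FreeMonoid.toList p ++ b :: a :: b :: b :: FreeMonoid.toList q := by
      rw [FreeMonoid.toList_mul, FreeMonoid.toList_mul, hbabb]
      simp
    rw [htl1, htl2]
    constructor
    · rintro (⟨m, hm⟩ | ⟨m, hm⟩)
      · exact absurd hm (no_babb_in_aab _ _ _)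
      · obtain ⟨i, j, hp, hq, hn⟩ := babb_in_abb _ _ _ hm
        obtain ⟨d, hQ, hj⟩ := repAbb_cancel _ _ _ hq
        refine Or.inr ⟨m - k, ?_⟩
        rw [hp, hQ, reassemble]
        congr 1
        omega
    · rintro (⟨m, hm⟩ | ⟨m, hm⟩)
      · exact absurd hm (no_babb_in_aab _ _ _)
      · obtain ⟨i, j, hp, hq, hn⟩ := babb_in_abb _ _ _ hm
        refine Or.inr ⟨m + k, ?_⟩
        rw [hp, hq]
        have : repAbb (2 * k) ++ repAbb j = repAbb (2 * k + j) := (repAbb_add _ _).symm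
        rw [this]
        rw [show repAbb i ++ [a, b] ++ b :: a :: b :: b :: repAbb (2 * k + j)
            = (repAbb i ++ [a, b]) ++ b :: a :: b :: b :: repAbb (2 * k + j) from by simp,
          reassemble]
        congr 1
        omega
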